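/- Suppose (Iₙˣ) and (Iₙˢ) are nonnegative sequences, 0 < μ < 1, α ≥ 0, κ ≥ 0 with κ/(λ⁻¹-k) < 1 where λ⁻¹ - k > 1, satisfying the coupled recursions I_{n+1}ˣ ≤ (κ/(λ⁻¹-k)) Iₙˣ + α μⁿ and I_{n+1}ˢ ≤ μ Iₙˢ + α μⁿ + (κ + α μⁿ) Iₙˣ. If additionally κ/(λ⁻¹-k) ≤ μ, then both Iₙˣ → 0 and Iₙˢ → 0 as n → ∞. -/

import Mathlib

open Filter

lemma aux_contract (μ : ℝ) (hμ0 : 0 < μ) (hμ1 : μ < 1) (a ε : ℕ → ℝ)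
    (ha : ∀ n, 0 ≤ a n) (hε : ∀ n, 0 ≤ ε n)
    (hrec : ∀ n, a (n + 1) ≤ μ * a n + ε n)
    (hεt : Tendsto ε atTop (nhds 0)) : Tendsto a atTop (nhds 0) := by
  rw [Metric.tendsto_atTop]
  intro δ hδ
  have hE : (0:ℝ) < (1 - μ) * δ / 2 := by
    have : 0 < 1 - μ := by linarith
    positivity
  obtain ⟨N, hN⟩ := (Metric.tendsto_atTop.mp hεt) _ hE
  have hNε : ∀ n ≥ N, ε n ≤ (1 - μ) * δ / 2 := by
    intro n hn
    have := hN n hn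
    rw [Real.dist_eq, sub_zero, abs_of_nonneg (hε n)] at this
    linarith
  have key : ∀ m, a (N + m) ≤ μ ^ m * a N + δ / 2 := by
    intro m
    induction m with
    | zero => simp; linarith [hδ]
    | succ m ih =>
      have h1 := hrec (N + m)
      have h2 := hNε (N + m) (Nat.le_add_right N m)
      have h3 : a (N + (m + 1)) = a (N + m + 1) := by ring_nf
      have hμm : 0 < μ ^ m := pow_pos hμ0 m
      calc a (N + (m + 1)) ≤ μ * a (N + m) + ε (N + m) := by rw [h3]; exact h1
        _ ≤ μ * (μ ^ m * a N + δ / 2) + (1 - μ) * δ / 2 := by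
            have := mul_le_mul_of_nonneg_left ih hμ0.le
            linarith
        _ = μ ^ (m + 1) * a N + δ / 2 := by ring
  -- choose M with μ^M * a N < δ/2
  have hpow : Tendsto (fun m : ℕ => μ ^ m * a N) atTop (nhds (0 * a N)) :=
    (tendsto_pow_atTop_nhds_zero_of_lt_one hμ0.le hμ1).mul_const (a N)
  rw [zero_mul] at hpow
  obtain ⟨M, hM⟩ := (Metric.tendsto_atTop.mp hpow) (δ / 2) (by linarith)
  refine ⟨N + M, fun n hn => ?_⟩
  obtain ⟨m, rfl⟩ : ∃ m, n = N + m := ⟨n - N, by omega⟩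
  have hmM : M ≤ m := by omega
  have h1 := key m
  have h2 := hM M le_rfl
  rw [Real.dist_eq, sub_zero, abs_of_nonneg (mul_nonneg (pow_nonneg hμ0.le M) (ha N))] at h2
  have h3 : μ ^ m * a N ≤ μ ^ M * a N :=
    mul_le_mul_of_nonneg_right (pow_le_pow_of_le_one hμ0.le hμ1.le hmM) (ha N)
  rw [Real.dist_eq, sub_zero, abs_of_nonneg (ha _)]
  linarith

theorem stmt_13 (μ α κ lam k : ℝ) (hμ0 : 0 < μ) (hμ1 : μ < 1)
    (hα : 0 ≤ α) (hκ : 0 ≤ κ) (hlk : lam⁻¹ - k > 1)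
    (hcontr : κ / (lam⁻¹ - k) < 1) (hle : κ / (lam⁻¹ - k) ≤ μ)
    (Ix Is : ℕ → ℝ) (hIx : ∀ n, 0 ≤ Ix n) (hIs : ∀ n, 0 ≤ Is n)
    (hrecx : ∀ n, Ix (n + 1) ≤ κ / (lam⁻¹ - k) * Ix n + α * μ ^ n)
    (hrecs : ∀ n, Is (n + 1) ≤ μ * Is n + α * μ ^ n + (κ + α * μ ^ n) * Ix n) :
    Filter.Tendsto Ix Filter.atTop (nhds 0) ∧
      Filter.Tendsto Is Filter.atTop (nhds 0) := by
  have hgeom : Tendsto (fun n : ℕ => μ ^ n) atTop (nhds 0) :=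
    tendsto_pow_atTop_nhds_zero_of_lt_one hμ0.le hμ1
  have hαgeom : Tendsto (fun n : ℕ => α * μ ^ n) atTop (nhds 0) := by
    have := hgeom.const_mul α
    simpa using this
  have hxt : Tendsto Ix atTop (nhds 0) := by
    apply aux_contract μ hμ0 hμ1 Ix (fun n => α * μ ^ n) hIx
      (fun n => mul_nonneg hα (pow_nonneg hμ0.le n)) _ hαgeom
    intro n
    have h1 := hrecx n
    have h2 : κ / (lam⁻¹ - k) * Ix n ≤ μ * Ix n :=
      mul_le_mul_of_nonneg_right hle (hIx n)
    linarith
  refine ⟨hxt, ?_⟩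
  apply aux_contract μ hμ0 hμ1 Is (fun n => α * μ ^ n + (κ + α * μ ^ n) * Ix n) hIs
  · intro n
    have h1 : 0 ≤ κ + α * μ ^ n := by positivity
    have h2 : 0 ≤ α * μ ^ n := by positivity
    exact add_nonneg h2 (mul_nonneg h1 (hIx n))
  · intro n; exact (hrecs n).trans_eq (by ring)
  · have h1 : Tendsto (fun n : ℕ => (κ + α * μ ^ n) * Ix n) atTop (nhds ((κ + 0) * 0)) :=
      ((tendsto_const_nhds.add hαgeom).mul hxt)
    have := hαgeom.add h1
    simpa using this
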